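/- arXiv:1210.3163 — 9 statements merged into one kernel-verified Lean document; each statement's English description precedes it below -/
import Mathlib

section
/- Let A and B be densely defined linear operators in complex Hilbert spaces H and K respectively, and assume A ⊣ B (A is quasi-similar to B) with intertwining operator T. Then B* ⊣ A* with intertwining operator T*; in particular T* : K → H is bounded, maps D(B*) into D(A*), satisfies A*T*η = T*B*η for all η ∈ D(B*), and T* is injective with densely defined inverse (T*)^{-1} = (T^{-1})*. -/
open scoped ComplexInnerProductSpace

noncomputable section

section Defs

variable {H K : Type*} [NormedAddCommGroup H] [InnerProductSpace ℂ H]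
  [NormedAddCommGroup K] [InnerProductSpace ℂ K]

/-- A bounded operator `T : H → K` is an intertwining operator for the densely defined
operators `A` (in `H`) and `B` (in `K`) if `T` maps `D(A)` into `D(B)` and
`B T ξ = T A ξ` for all `ξ ∈ D(A)`. -/
def Intertwines (T : H →L[ℂ] K) (A : H →ₗ.[ℂ] H) (B : K →ₗ.[ℂ] K) : Prop :=
  ∀ x : A.domain, ∃ hx : T (x : H) ∈ B.domain, B ⟨T (x : H), hx⟩ = T (A x)

/-- `l` belongs to the resolvent set `ρ(A)`: `A - l·I` is a bijection from `D(A)` onto `H`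
with bounded inverse. -/
def InResolvent (A : H →ₗ.[ℂ] H) (l : ℂ) : Prop :=
  (Function.Injective fun x : A.domain => A x - l • (x : H)) ∧
  (Function.Surjective fun x : A.domain => A x - l • (x : H)) ∧
  ∃ C : ℝ, ∀ x : A.domain, ‖(x : H)‖ ≤ C * ‖A x - l • (x : H)‖

/-- `l` belongs to the point spectrum `σ_p(A)`: it is an eigenvalue of `A`. -/
def InPointSpectrum (A : H →ₗ.[ℂ] H) (l : ℂ) : Prop :=
  ∃ x : A.domain, (x : H) ≠ 0 ∧ A x = l • (x : H)

/-- `l` belongs to the continuous spectrum `σ_c(A)`: `A - l·I` is injective with dense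
range, but its inverse is unbounded. -/
def InContinuousSpectrum (A : H →ₗ.[ℂ] H) (l : ℂ) : Prop :=
  (Function.Injective fun x : A.domain => A x - l • (x : H)) ∧
  DenseRange (fun x : A.domain => A x - l • (x : H)) ∧
  ¬ ∃ C : ℝ, ∀ x : A.domain, ‖(x : H)‖ ≤ C * ‖A x - l • (x : H)‖

/-- `l` belongs to the residual spectrum `σ_r(A)`: `A - l·I` is injective but its range
is not dense. -/
def InResidualSpectrum (A : H →ₗ.[ℂ] H) (l : ℂ) : Prop :=
  (Function.Injective fun x : A.domain => A x - l • (x : H)) ∧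
  ¬ DenseRange (fun x : A.domain => A x - l • (x : H))

/-- The multiplicity of `l` as an eigenvalue of `A`, i.e. `dim ker (A - l·I)`. -/
def eigMultiplicity (A : H →ₗ.[ℂ] H) (l : ℂ) : Cardinal :=
  Module.rank ℂ (LinearMap.ker (A.toFun - l • A.domain.subtype))

end Defs

/-- The inverse of an injective bounded operator `T`, as a partially defined operator
with domain the range of `T`. -/
def pmapInverse {H K : Type*} [NormedAddCommGroup H] [InnerProductSpace ℂ H]
    [NormedAddCommGroup K] [InnerProductSpace ℂ K]
    (T : H →L[ℂ] K) (hTinj : Function.Injective T) : K →ₗ.[ℂ] H where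
  domain := LinearMap.range (T : H →ₗ[ℂ] K)
  toFun := (LinearEquiv.ofInjective (T : H →ₗ[ℂ] K) hTinj).symm.toLinearMap

/-- If `A ⊣ B` (quasi-similar) with intertwining operator `T` (bounded,
injective, with dense range), then `B* ⊣ A*` with intertwining operator `T*`: `T*` maps
`D(B*)` into `D(A*)` with `A* T* η = T* B* η` on `D(B*)`, and `T*` is injective with
densely defined inverse satisfying `(T*)⁻¹ = (T⁻¹)*` (the latter expressed by:
`D((T⁻¹)*) = R(T*)` and `(T⁻¹)* (T* η) = η` for all `η`). -/
theorem statement_9 {H K : Type*} [NormedAddCommGroup H] [InnerProductSpace ℂ H]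
    [CompleteSpace H] [NormedAddCommGroup K] [InnerProductSpace ℂ K] [CompleteSpace K]
    (A : H →ₗ.[ℂ] H) (B : K →ₗ.[ℂ] K)
    (hA : Dense (A.domain : Set H)) (hB : Dense (B.domain : Set K))
    (T : H →L[ℂ] K) (hTinj : Function.Injective T) (hTrg : DenseRange T)
    (hT : Intertwines T A B) :
    Intertwines (ContinuousLinearMap.adjoint T) B.adjoint A.adjoint ∧
    Function.Injective (ContinuousLinearMap.adjoint T) ∧
    DenseRange (ContinuousLinearMap.adjoint T) ∧
    (pmapInverse T hTinj).adjoint.domain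
      = LinearMap.range ((ContinuousLinearMap.adjoint T : K →L[ℂ] H) : K →ₗ[ℂ] H) ∧
    (∀ η : K, ∃ h : ContinuousLinearMap.adjoint T η ∈ (pmapInverse T hTinj).adjoint.domain,
      (pmapInverse T hTinj).adjoint ⟨ContinuousLinearMap.adjoint T η, h⟩ = η) := by

  classical
  -- The inverse as a partial map, and its basic property
  set S := pmapInverse T hTinj with hSdef
  have hSdom : Dense ((S.domain : Submodule ℂ K) : Set K) := by
    have h1 : ((S.domain : Submodule ℂ K) : Set K) = Set.range T := by
      ext y
      simp [hSdef, pmapInverse, LinearMap.mem_range]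
    rw [h1]
    exact hTrg
  have hTS : ∀ y : S.domain, T (S y) = (y : K) := by
    intro y
    have h2 := LinearEquiv.ofInjective_symm_apply (f := (T : H →ₗ[ℂ] K)) (h := hTinj) y
    exact h2
  -- Part 1: intertwining
  have hInt : Intertwines (ContinuousLinearMap.adjoint T) B.adjoint A.adjoint := by
    intro η
    have key : ∀ x : A.domain,
        ⟪ContinuousLinearMap.adjoint T (B.adjoint η), (x : H)⟫
          = ⟪ContinuousLinearMap.adjoint T (η : K), A x⟫ := by
      intro x
      obtain ⟨hx, hBx⟩ := hT x
      rw [ContinuousLinearMap.adjoint_inner_left, ContinuousLinearMap.adjoint_inner_left,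
        ← hBx]
      exact LinearPMap.adjoint_isFormalAdjoint hB η ⟨T (x : H), hx⟩
    have hmem : ContinuousLinearMap.adjoint T (η : K) ∈ A.adjoint.domain :=
      LinearPMap.mem_adjoint_domain_of_exists _
        ⟨ContinuousLinearMap.adjoint T (B.adjoint η), key⟩
    exact ⟨hmem, LinearPMap.adjoint_apply_eq hA ⟨_, hmem⟩ key⟩
  refine ⟨hInt, ?_, ?_, ?_, ?_⟩
  -- Part 2: injectivity of T*
  · intro η₁ η₂ h
    have : ∀ x : H, ⟪η₁ - η₂, T x⟫ = 0 := by
      intro x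
      rw [inner_sub_left, ← ContinuousLinearMap.adjoint_inner_left T,
        ← ContinuousLinearMap.adjoint_inner_left T, h, sub_self]
    have h0 : η₁ - η₂ = 0 := by
      have hd : Dense ((LinearMap.range (T : H →ₗ[ℂ] K) : Submodule ℂ K) : Set K) := hSdom
      refine hd.eq_zero_of_inner_left ℂ fun v hv => ?_
      obtain ⟨x, hx⟩ := hv
      simp only [← hx]
      exact this x
    exact sub_eq_zero.mp h0
  -- Part 3: dense range of T*
  · have hR : Dense ((LinearMap.range
        ((ContinuousLinearMap.adjoint T : K →L[ℂ] H) : K →ₗ[ℂ] H) : Submodule ℂ H) : Set H) := by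
      rw [Submodule.dense_iff_topologicalClosure_eq_top,
        Submodule.topologicalClosure_eq_top_iff]
      rw [Submodule.eq_bot_iff]
      intro x hx
      have hx' : ∀ η : K, ⟪η, T x⟫ = 0 := by
        intro η
        rw [← ContinuousLinearMap.adjoint_inner_left T]
        exact hx _ ⟨η, rfl⟩
      have : T x = 0 := by
        have := hx' (T x)
        rwa [inner_self_eq_zero] at this
      have : T x = T 0 := by simpa using this
      exact hTinj this
    have : Set.range (ContinuousLinearMap.adjoint T)
        = ((LinearMap.range ((ContinuousLinearMap.adjoint T : K →L[ℂ] H) : K →ₗ[ℂ] H)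
            : Submodule ℂ H) : Set H) := by
      ext x; simp [LinearMap.mem_range]
    rw [DenseRange, this]
    exact hR
  -- Part 4: domain of (T⁻¹)* equals range T*
  · apply le_antisymm
    · intro x hx
      -- x in adjoint domain of S; set η := S† x, then T* η = x
      set η := S.adjoint ⟨x, hx⟩ with hη
      have hform := LinearPMap.adjoint_isFormalAdjoint hSdom (T := S) ⟨x, hx⟩
      have : ContinuousLinearMap.adjoint T η = x := by
        apply ext_inner_right ℂ
        intro z
        rw [ContinuousLinearMap.adjoint_inner_left]
        have hz : T z ∈ S.domain := ⟨z, rfl⟩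
        have := hform ⟨T z, hz⟩
        -- ⟪η, T z⟫ = ⟪x, S (T z)⟫ and S (T z) = z
        have hSz : S ⟨T z, hz⟩ = z := by
          apply hTinj
          rw [hTS ⟨T z, hz⟩]
        rw [this, hSz]
      exact ⟨η, this⟩
    · rintro x ⟨η, rfl⟩
      apply LinearPMap.mem_adjoint_domain_of_exists
      refine ⟨η, fun y => ?_⟩
      show ⟪η, (y : K)⟫ = ⟪ContinuousLinearMap.adjoint T η, S y⟫
      rw [ContinuousLinearMap.adjoint_inner_left, hTS y]
  -- Part 5: (T⁻¹)* (T* η) = η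
  · intro η
    have hmem : ContinuousLinearMap.adjoint T η ∈ S.adjoint.domain := by
      apply LinearPMap.mem_adjoint_domain_of_exists
      refine ⟨η, fun y => ?_⟩
      rw [ContinuousLinearMap.adjoint_inner_left, hTS y]
    refine ⟨hmem, ?_⟩
    apply LinearPMap.adjoint_apply_eq hSdom
    intro y
    rw [ContinuousLinearMap.adjoint_inner_left, hTS y]
end
end

section
/- Let A be a densely defined linear operator in a complex Hilbert space H, B a densely defined closable operator in a complex Hilbert space K, and T : H → K a bounded injective operator with dense range. Assume the weak intertwining relation (ws): ⟨Tξ, B*η⟩ = ⟨TAξ, η⟩ for all ξ ∈ D(A) and all η ∈ D(B*). Then A is closable. -/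
open scoped ComplexInnerProductSpace

noncomputable section

/-- If `z` is orthogonal to the domain of the adjoint of a closable operator `B`,
then `z = 0`. -/
theorem ortho_adjoint_domain_eq_zero {K : Type*} [NormedAddCommGroup K]
    [InnerProductSpace ℂ K] [CompleteSpace K] (B : K →ₗ.[ℂ] K)
    (hBclosable : B.IsClosable) (z : K)
    (hz : ∀ η : B.adjoint.domain, ⟪(η : K), z⟫ = 0) : z = 0 := by
  classical
  set e : WithLp 2 (K × K) ≃L[ℂ] K × K := WithLp.prodContinuousLinearEquiv 2 ℂ K K with he
  set G : Submodule ℂ (WithLp 2 (K × K)) :=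
    B.graph.comap (e.toLinearEquiv : WithLp 2 (K × K) →ₗ[ℂ] K × K) with hG
  -- `e.symm (0, z)` belongs to `Gᗮᗮ`
  have hmem : e.symm (0, z) ∈ Gᗮᗮ := by
    rw [Submodule.mem_orthogonal]
    intro w hw
    rw [Submodule.mem_orthogonal] at hw
    -- the second component of `w` is in the adjoint domain
    have hw2 : (e w).2 ∈ B.adjoint.domain := by
      apply LinearPMap.mem_adjoint_domain_of_exists
      refine ⟨-(e w).1, fun x => ?_⟩
      have hx : e.symm ((x : K), B x) ∈ G := by
        have := B.mem_graph x
        simp only [hG, Submodule.mem_comap, LinearEquiv.coe_coe,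
          ContinuousLinearEquiv.coe_toLinearEquiv, ContinuousLinearEquiv.apply_symm_apply]
        exact this
      have h0 := hw _ hx
      have h0' : ⟪(x : K), (e w).1⟫ + ⟪B x, (e w).2⟫ = 0 := by
        have := h0
        rw [WithLp.prod_inner_apply] at this
        simpa [he] using this
      have : ⟪B x, (e w).2⟫ = -⟪(x : K), (e w).1⟫ := by linear_combination h0'
      calc ⟪-(e w).1, (x : K)⟫ = -⟪(e w).1, (x : K)⟫ := by rw [inner_neg_left]
        _ = -(starRingEnd ℂ) ⟪(x : K), (e w).1⟫ := by rw [inner_conj_symm]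
        _ = (starRingEnd ℂ) ⟪B x, (e w).2⟫ := by rw [this]; simp
        _ = ⟪(e w).2, B x⟫ := by rw [inner_conj_symm]
    have h3 := hz ⟨(e w).2, hw2⟩
    rw [WithLp.prod_inner_apply]
    simp only [he] at h3 ⊢
    simpa using h3
  rw [Submodule.orthogonal_orthogonal_eq_closure] at hmem
  -- transfer to closure of the graph of B
  have hmem' : ((0 : K), z) ∈ B.graph.topologicalClosure := by
    have h1 : (G : Set (WithLp 2 (K × K))) = ⇑e ⁻¹' (B.graph : Set (K × K)) := rfl
    have h2 : e.symm ((0 : K), z) ∈ closure (G : Set (WithLp 2 (K × K))) := hmem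
    have h3 : closure (⇑e ⁻¹' (B.graph : Set (K × K)))
        = ⇑e ⁻¹' closure (B.graph : Set (K × K)) := (e.toHomeomorph.preimage_closure _).symm
    rw [h1, h3] at h2
    have h4 : e (e.symm ((0 : K), z)) ∈ closure (B.graph : Set (K × K)) := h2
    rw [e.apply_symm_apply] at h4
    rw [← SetLike.mem_coe, Submodule.topologicalClosure_coe]
    exact h4
  obtain ⟨f, hf⟩ := hBclosable
  rw [hf, LinearPMap.mem_graph_iff] at hmem'
  obtain ⟨x, hx1, hx2⟩ := hmem'
  have hx0 : x = 0 := Subtype.ext hx1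
  rw [hx0] at hx2
  simpa using hx2.symm

/-- Let `A` be densely defined in `H`, `B` densely defined and closable in `K`,
and `T : H → K` bounded, injective, with dense range. If the weak intertwining relation (ws)
`⟨Tξ, B*η⟩ = ⟨TAξ, η⟩` holds for all `ξ ∈ D(A)`, `η ∈ D(B*)`, then `A` is closable. -/
theorem statement_10 {H K : Type*} [NormedAddCommGroup H] [InnerProductSpace ℂ H]
    [NormedAddCommGroup K] [InnerProductSpace ℂ K] [CompleteSpace K]
    (A : H →ₗ.[ℂ] H) (B : K →ₗ.[ℂ] K)
    (hA : Dense (A.domain : Set H)) (hB : Dense (B.domain : Set K))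
    (hBclosable : B.IsClosable)
    (T : H →L[ℂ] K) (hTinj : Function.Injective T) (hTrg : DenseRange T)
    (hws : ∀ (ξ : A.domain) (η : B.adjoint.domain),
      ⟪B.adjoint η, T (ξ : H)⟫ = ⟪(η : K), T (A ξ)⟫) :
    A.IsClosable := by
  have key : ∀ (x : H × H), x ∈ A.graph.topologicalClosure → x.1 = 0 → x.2 = 0 := by
    intro p hp hp1
    -- step 1: `T p.2` is orthogonal to the adjoint domain of `B`
    have h1 : ∀ η : B.adjoint.domain, ⟪(η : K), T p.2⟫ = 0 := by
      intro η
      have hclosed : IsClosed {q : H × H | ⟪B.adjoint η, T q.1⟫ = ⟪(η : K), T q.2⟫} :=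
        isClosed_eq
          (Continuous.inner continuous_const (T.continuous.comp continuous_fst))
          (Continuous.inner continuous_const (T.continuous.comp continuous_snd))
      have hsub : (A.graph : Set (H × H)) ⊆
          {q : H × H | ⟪B.adjoint η, T q.1⟫ = ⟪(η : K), T q.2⟫} := by
        rintro q hq
        rw [SetLike.mem_coe, LinearPMap.mem_graph_iff] at hq
        obtain ⟨x, hx1, hx2⟩ := hq
        simp only [Set.mem_setOf_eq, ← hx1, ← hx2]
        exact hws x η
      have hp' : p ∈ closure (A.graph : Set (H × H)) := by
        rw [← SetLike.mem_coe, Submodule.topologicalClosure_coe] at hp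
        exact hp
      have := closure_minimal hsub hclosed hp'
      simp only [Set.mem_setOf_eq, hp1] at this
      simpa using this.symm
    have hz : T p.2 = 0 := ortho_adjoint_domain_eq_zero B hBclosable _ h1
    apply hTinj
    simpa using hz
  exact ⟨A.graph.topologicalClosure.toLinearPMap,
    (Submodule.toLinearPMap_graph_eq _ key).symm⟩
end
end

section
/- Let A and B be closed, densely defined linear operators in a complex Hilbert space H and assume A ⊣ B where the intertwining operator is a bounded metric operator G (i.e., G maps D(A) into D(B) and BGξ = GAξ for all ξ ∈ D(A)). Then for every η ∈ D(B*) one has Gη ∈ D(A*), A*Gη ∈ R(G), and G^{-1}A*Gη = B*η; in other words, B* is a restriction of the operator A^⋆_G := G^{-1}A*G. -/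
open scoped ComplexInnerProductSpace

noncomputable section

/-- Let `A`, `B` be closed, densely defined in `H` with `A ⊣ B`, the
intertwining operator being a bounded metric operator `G`. Then for every `η ∈ D(B*)`:
`G η ∈ D(A*)`, `A* G η ∈ R(G)` and `G⁻¹ A* G η = B* η` (i.e. `A* G η = G B* η`);
in other words `B*` is a restriction of `A^⋆_G = G⁻¹ A* G`. -/
theorem statement_11 {H : Type*} [NormedAddCommGroup H] [InnerProductSpace ℂ H]
    [CompleteSpace H]
    (A B : H →ₗ.[ℂ] H)
    (hA : Dense (A.domain : Set H)) (hB : Dense (B.domain : Set H))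
    (hAc : A.IsClosed) (hBc : B.IsClosed)
    (G : H →L[ℂ] H)
    (hGsa : IsSelfAdjoint G) (hGpos : ∀ ξ : H, ξ ≠ 0 → 0 < (⟪G ξ, ξ⟫).re)
    (hGinj : Function.Injective G) (hGrg : DenseRange G)
    (hG : Intertwines G A B) :
    ∀ η : B.adjoint.domain, ∃ h : G (η : H) ∈ A.adjoint.domain,
      A.adjoint ⟨G (η : H), h⟩ ∈ Set.range G ∧
      A.adjoint ⟨G (η : H), h⟩ = G (B.adjoint η) := by
  intro η
  have hGadj : ContinuousLinearMap.adjoint G = G :=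
    ContinuousLinearMap.isSelfAdjoint_iff'.mp hGsa
  have hGinner : ∀ u v : H, ⟪G u, v⟫ = ⟪u, G v⟫ := by
    intro u v
    rw [← hGadj, ContinuousLinearMap.adjoint_inner_left, hGadj]
  have key : ∀ x : A.domain, ⟪G (B.adjoint η), (x : H)⟫ = ⟪G (η : H), A x⟫ := by
    intro x
    obtain ⟨hx, hBx⟩ := hG x
    calc ⟪G (B.adjoint η), (x : H)⟫ = ⟪B.adjoint η, G (x : H)⟫ := hGinner _ _
      _ = ⟪(η : H), B ⟨G (x : H), hx⟩⟫ := LinearPMap.adjoint_isFormalAdjoint hB η ⟨G (x : H), hx⟩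
      _ = ⟪(η : H), G (A x)⟫ := by rw [hBx]
      _ = ⟪G (η : H), A x⟫ := (hGinner _ _).symm
  have hmem : G (η : H) ∈ A.adjoint.domain :=
    LinearPMap.mem_adjoint_domain_of_exists _ ⟨G (B.adjoint η), key⟩
  refine ⟨hmem, ?_, ?_⟩
  · rw [LinearPMap.adjoint_apply_eq hA ⟨G (η : H), hmem⟩ key]
    exact ⟨B.adjoint η, rfl⟩
  · exact LinearPMap.adjoint_apply_eq hA ⟨G (η : H), hmem⟩ key
end
end

section
/- Let A and B be closed, densely defined linear operators in complex Hilbert spaces H and K respectively, and assume A ⊣ B. Then the residual spectra satisfy σ_r(B) ⊆ σ_r(A). -/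
open scoped ComplexInnerProductSpace

noncomputable section

/-- If `A`, `B` are closed, densely defined and `A ⊣ B`, then
`σ_r(B) ⊆ σ_r(A)`. -/
theorem statement_13 {H K : Type*} [NormedAddCommGroup H] [InnerProductSpace ℂ H]
    [NormedAddCommGroup K] [InnerProductSpace ℂ K]
    (A : H →ₗ.[ℂ] H) (B : K →ₗ.[ℂ] K)
    (hA : Dense (A.domain : Set H)) (hB : Dense (B.domain : Set K))
    (hAc : A.IsClosed) (hBc : B.IsClosed)
    (T : H →L[ℂ] K) (hTinj : Function.Injective T) (hTrg : DenseRange T)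
    (hT : Intertwines T A B) :
    ∀ l : ℂ, InResidualSpectrum B l → InResidualSpectrum A l := by
  intro l hBl
  obtain ⟨hBinj, hBnd⟩ := hBl
  have key : ∀ x : A.domain, ∃ hx : T (x : H) ∈ B.domain,
      B ⟨T (x : H), hx⟩ - l • (T (x : H)) = T (A x - l • (x : H)) := by
    intro x
    obtain ⟨hx, hBx⟩ := hT x
    exact ⟨hx, by rw [hBx, map_sub, map_smul]⟩
  constructor
  · intro x y hxy
    obtain ⟨hx1, hx2⟩ := key x
    obtain ⟨hy1, hy2⟩ := key y
    have heq : B ⟨T (x : H), hx1⟩ - l • (T (x : H))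
        = B ⟨T (y : H), hy1⟩ - l • (T (y : H)) := by
      rw [hx2, hy2]; exact congrArg T hxy
    have h2 : (⟨T (x : H), hx1⟩ : B.domain) = ⟨T (y : H), hy1⟩ := hBinj heq
    have hTxy : T (x : H) = T (y : H) := congrArg Subtype.val h2
    exact Subtype.ext (hTinj hTxy)
  · intro hAd
    apply hBnd
    have hdense : DenseRange (T ∘ fun x : A.domain => A x - l • (x : H)) :=
      hTrg.comp hAd T.continuous
    refine Dense.mono ?_ hdense
    rintro _ ⟨x, rfl⟩
    obtain ⟨hx1, hx2⟩ := key x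
    exact ⟨⟨T (x : H), hx1⟩, hx2⟩
end
end

section
/- Let A and B be closed, densely defined linear operators in complex Hilbert spaces H and K respectively, and assume A ⊣ B with intertwining operator T satisfying in addition TD(A) = D(B). Then σ_p(A) = σ_p(B). -/
open scoped ComplexInnerProductSpace

noncomputable section

/-- If `A`, `B` are closed, densely defined and `A ⊣ B` with intertwining
operator `T` satisfying in addition `T D(A) = D(B)`, then `σ_p(A) = σ_p(B)`. -/
theorem statement_14 {H K : Type*} [NormedAddCommGroup H] [InnerProductSpace ℂ H]
    [NormedAddCommGroup K] [InnerProductSpace ℂ K]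
    (A : H →ₗ.[ℂ] H) (B : K →ₗ.[ℂ] K)
    (hA : Dense (A.domain : Set H)) (hB : Dense (B.domain : Set K))
    (hAc : A.IsClosed) (hBc : B.IsClosed)
    (T : H →L[ℂ] K) (hTinj : Function.Injective T) (hTrg : DenseRange T)
    (hT : Intertwines T A B)
    (hTD : Submodule.map (T : H →ₗ[ℂ] K) A.domain = B.domain) :
    ∀ l : ℂ, InPointSpectrum A l ↔ InPointSpectrum B l := by
  intro l
  constructor
  · rintro ⟨x, hx0, hAx⟩
    obtain ⟨hTx, hBTx⟩ := hT x
    refine ⟨⟨T x, hTx⟩, fun h => hx0 (hTinj (by simpa using h)), ?_⟩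
    rw [hBTx, hAx]
    simp
  · rintro ⟨y, hy0, hBy⟩
    have hy : (y : K) ∈ Submodule.map (T : H →ₗ[ℂ] K) A.domain := by rw [hTD]; exact y.2
    obtain ⟨x, hxA, hxy⟩ := hy
    obtain ⟨hTx, hBTx⟩ := hT ⟨x, hxA⟩
    refine ⟨⟨x, hxA⟩, fun h => hy0 ?_, hTinj ?_⟩
    · simp only at h
      rw [← hxy, h]; simp
    · have : B ⟨T x, hTx⟩ = B y := by congr 1; exact Subtype.ext (by simpa using hxy)
      rw [this, hBy] at hBTx
      simp only [ContinuousLinearMap.map_smul]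
      rw [← hBTx, ← hxy]; rfl
end
end

section
/- Let A and B be closed, densely defined linear operators in complex Hilbert spaces H and K respectively, and assume A ⊣ B with intertwining operator T. Suppose that T is bijective with bounded inverse T^{-1} : K → H and that TD(A) is a core for B. Then σ_p(B) ⊆ σ(A). -/
open scoped ComplexInnerProductSpace

noncomputable section

/-- If `A`, `B` are closed, densely defined and `A ⊣ B` with intertwining
operator `T` which is bijective with bounded inverse, and `T D(A)` is a core for `B`,
then `σ_p(B) ⊆ σ(A)`. -/
theorem statement_15 {H K : Type*} [NormedAddCommGroup H] [InnerProductSpace ℂ H]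
    [NormedAddCommGroup K] [InnerProductSpace ℂ K]
    (A : H →ₗ.[ℂ] H) (B : K →ₗ.[ℂ] K)
    (hA : Dense (A.domain : Set H)) (hB : Dense (B.domain : Set K))
    (hAc : A.IsClosed) (hBc : B.IsClosed)
    (T : H ≃L[ℂ] K) (hT : Intertwines (T : H →L[ℂ] K) A B)
    (hcore : Submodule.topologicalClosure
        ((B.domRestrict (Submodule.map ((T : H →L[ℂ] K) : H →ₗ[ℂ] K) A.domain)).graph)
      = B.graph) :
    ∀ l : ℂ, InPointSpectrum B l → ¬ InResolvent A l := by
  intro l hp hr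
  obtain ⟨y, hy0, hyB⟩ := hp
  obtain ⟨_, _, C, hC⟩ := hr
  set Tc : H →L[ℂ] K := (T : H →L[ℂ] K)
  set Sc : K →L[ℂ] H := (T.symm : K →L[ℂ] H)
  set M : ℝ := (max ‖Tc‖ 1) * ((max C 1) * (max ‖Sc‖ 1)) with hMdef
  set S : Submodule ℂ K := Submodule.map ((T : H →L[ℂ] K) : H →ₗ[ℂ] K) A.domain with hSdef
  -- the key pointwise inequality on the graph of the restriction
  have key : ∀ p : K × K, p ∈ (B.domRestrict S).graph → ‖p.1‖ ≤ M * ‖p.2 - l • p.1‖ := by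
    intro p hpmem
    rw [LinearPMap.mem_graph_iff] at hpmem
    obtain ⟨z, hz1, hz2⟩ := hpmem
    have hzS : (z : K) ∈ S ⊓ B.domain := z.2
    obtain ⟨x, hxA, hTx⟩ := hzS.1
    obtain ⟨hBmem, hBval⟩ := hT ⟨x, hxA⟩
    -- identify p.2 with B (T x)
    have hval : (B.domRestrict S) z = B ⟨Tc x, hBmem⟩ := by
      apply LinearPMap.domRestrict_apply
      exact hTx.symm
    have hp2 : p.2 = Tc (A ⟨x, hxA⟩) := by rw [← hz2, hval, hBval]
    have hp1 : p.1 = Tc x := by rw [← hz1]; exact hTx.symm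
    have hdiff : p.2 - l • p.1 = Tc (A ⟨x, hxA⟩ - l • x) := by
      rw [hp1, hp2, map_sub, map_smul]
    -- norm estimates
    have h1 : ‖(x : H)‖ ≤ (max C 1) * ‖A ⟨x, hxA⟩ - l • x‖ := by
      refine le_trans (hC ⟨x, hxA⟩) ?_
      exact mul_le_mul_of_nonneg_right (le_max_left _ _) (norm_nonneg _)
    have h2 : ‖A ⟨x, hxA⟩ - l • x‖ ≤ (max ‖Sc‖ 1) * ‖p.2 - l • p.1‖ := by
      have : A ⟨x, hxA⟩ - l • x = Sc (p.2 - l • p.1) := by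
        rw [hdiff]
        simp [Tc, Sc]
      rw [this]
      refine le_trans (Sc.le_opNorm _) ?_
      exact mul_le_mul_of_nonneg_right (le_max_left _ _) (norm_nonneg _)
    have h3 : ‖p.1‖ ≤ (max ‖Tc‖ 1) * ‖(x : H)‖ := by
      rw [hp1]
      refine le_trans (Tc.le_opNorm _) ?_
      exact mul_le_mul_of_nonneg_right (le_max_left _ _) (norm_nonneg _)
    have hT1 : (0:ℝ) ≤ max ‖Tc‖ 1 := le_trans zero_le_one (le_max_right _ _)
    have hC1 : (0:ℝ) ≤ max C 1 := le_trans zero_le_one (le_max_right _ _)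
    calc ‖p.1‖ ≤ (max ‖Tc‖ 1) * ‖(x : H)‖ := h3
      _ ≤ (max ‖Tc‖ 1) * ((max C 1) * ‖A ⟨x, hxA⟩ - l • x‖) :=
          mul_le_mul_of_nonneg_left h1 hT1
      _ ≤ (max ‖Tc‖ 1) * ((max C 1) * ((max ‖Sc‖ 1) * ‖p.2 - l • p.1‖)) := by
          refine mul_le_mul_of_nonneg_left (mul_le_mul_of_nonneg_left h2 hC1) hT1
      _ = M * ‖p.2 - l • p.1‖ := by rw [hMdef]; ring
  -- the inequality passes to the closure of the graph
  have hclosed : IsClosed {p : K × K | ‖p.1‖ ≤ M * ‖p.2 - l • p.1‖} := by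
    apply isClosed_le
    · exact (continuous_fst.norm)
    · exact (continuous_const.mul ((continuous_snd.sub (continuous_fst.const_smul l)).norm))
  have hsub : (B.graph : Set (K × K)) ⊆ {p : K × K | ‖p.1‖ ≤ M * ‖p.2 - l • p.1‖} := by
    rw [← hcore]
    rw [Submodule.topologicalClosure_coe]
    exact closure_minimal (fun p hp => key p hp) hclosed
  -- apply to the eigenvector
  have hyg : ((y : K), B y) ∈ B.graph := B.mem_graph y
  have := hsub hyg
  simp only [Set.mem_setOf_eq, hyB, sub_self, norm_zero, mul_zero] at this
  exact hy0 (norm_le_zero_iff.mp this)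
end
end

section
/- Let A and B be closed, densely defined linear operators in complex Hilbert spaces H and K respectively, and assume A ⊣ B with intertwining operator T. Let λ ∈ ρ(A) and define X_λ η := T(A − λI)^{-1}T^{-1}η for η ∈ D(T^{-1}) = R(T). Then: (a.1) for every η ∈ R(T), X_λ η ∈ D(B) and (B − λI)X_λ η = η; and (a.2) if moreover (B − λI)η ∈ R(T) for every η ∈ D(B) and λ ∉ σ_p(B), then X_λ(B − λI)η = η for every η ∈ D(B). -/
open scoped ComplexInnerProductSpace

noncomputable section

/-- Let `A ⊣ B` with intertwining operator `T`, and `λ ∈ ρ(A)`. With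
`X_λ = T (A - λI)⁻¹ T⁻¹` defined on `R(T)`:
(a.1) `(B - λI) X_λ η = η` for every `η ∈ R(T)` (expressed via: if `ξ ∈ H` and
`x = (A - λI)⁻¹ ξ`, then `T x ∈ D(B)` and `(B - λI) T x = T ξ`); and
(a.2) if `(B - λI) η ∈ R(T)` for every `η ∈ D(B)` and `λ ∉ σ_p(B)`, then
`X_λ (B - λI) η = η` for every `η ∈ D(B)`. -/
theorem statement_16 {H K : Type*} [NormedAddCommGroup H] [InnerProductSpace ℂ H]
    [NormedAddCommGroup K] [InnerProductSpace ℂ K]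
    (A : H →ₗ.[ℂ] H) (B : K →ₗ.[ℂ] K)
    (hA : Dense (A.domain : Set H)) (hB : Dense (B.domain : Set K))
    (hAc : A.IsClosed) (hBc : B.IsClosed)
    (T : H →L[ℂ] K) (hTinj : Function.Injective T) (hTrg : DenseRange T)
    (hT : Intertwines T A B)
    (l : ℂ) (hl : InResolvent A l) :
    (∀ (ξ : H) (x : A.domain), A x - l • (x : H) = ξ →
      ∃ hx : T (x : H) ∈ B.domain, B ⟨T (x : H), hx⟩ - l • T (x : H) = T ξ) ∧
    ((∀ η : B.domain, B η - l • (η : K) ∈ Set.range T) → ¬ InPointSpectrum B l →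
      ∀ (η : B.domain) (ξ : H) (x : A.domain),
        T ξ = B η - l • (η : K) → A x - l • (x : H) = ξ → T (x : H) = (η : K)) := by
  have part1 : ∀ (ξ : H) (x : A.domain), A x - l • (x : H) = ξ →
      ∃ hx : T (x : H) ∈ B.domain, B ⟨T (x : H), hx⟩ - l • T (x : H) = T ξ := by
    intro ξ x hx
    obtain ⟨hTx, hB⟩ := hT x
    refine ⟨hTx, ?_⟩
    rw [hB, ← hx, map_sub, map_smul]
  refine ⟨part1, ?_⟩
  intro hrg hnp η ξ x hTξ hx
  obtain ⟨hTx, hB1⟩ := part1 ξ x hx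
  -- (B - l)(Tx) = Tξ = (B - l)η, injectivity from ¬InPointSpectrum
  by_contra hne
  apply hnp
  refine ⟨⟨T (x : H), hTx⟩ - η, ?_, ?_⟩
  · simpa [sub_eq_zero] using hne
  · rw [LinearPMap.map_sub]
    have h2 : B ⟨T (x : H), hTx⟩ - l • T (x : H) = B η - l • (η : K) := by
      rw [hB1, hTξ]
    have : ((⟨T (x : H), hTx⟩ - η : B.domain) : K) = T (x : H) - (η : K) := rfl
    rw [this, smul_sub]
    linear_combination (norm := abel1) h2
end
end

section
/- Let A and B be closed, densely defined linear operators in complex Hilbert spaces H and K respectively, and assume A ⊣ B with intertwining operator T which is bijective with bounded inverse T^{-1} : K → H. Then ρ(A) \ σ_p(B) ⊆ ρ(B) and ρ(B) \ σ_r(A) ⊆ ρ(A). -/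
open scoped ComplexInnerProductSpace

noncomputable section

/-- If `A`, `B` are closed, densely defined and `A ⊣ B` with intertwining
operator `T` which is bijective with bounded inverse, then `ρ(A) \ σ_p(B) ⊆ ρ(B)` and
`ρ(B) \ σ_r(A) ⊆ ρ(A)`. -/
theorem statement_18 {H K : Type*} [NormedAddCommGroup H] [InnerProductSpace ℂ H]
    [NormedAddCommGroup K] [InnerProductSpace ℂ K]
    (A : H →ₗ.[ℂ] H) (B : K →ₗ.[ℂ] K)
    (hA : Dense (A.domain : Set H)) (hB : Dense (B.domain : Set K))
    (hAc : A.IsClosed) (hBc : B.IsClosed)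
    (T : H ≃L[ℂ] K) (hT : Intertwines (T : H →L[ℂ] K) A B) :
    (∀ l : ℂ, InResolvent A l → ¬ InPointSpectrum B l → InResolvent B l) ∧
    (∀ l : ℂ, InResolvent B l → ¬ InResidualSpectrum A l → InResolvent A l) := by
  have key : ∀ l : ℂ, ∀ x : A.domain, ∃ hx : (T : H →L[ℂ] K) (x : H) ∈ B.domain,
      B ⟨(T : H →L[ℂ] K) (x : H), hx⟩ - l • (T : H →L[ℂ] K) (x : H)
        = (T : H →L[ℂ] K) (A x - l • (x : H)) := by
    intro l x
    obtain ⟨hx, hBx⟩ := hT x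
    exact ⟨hx, by rw [hBx, map_sub, map_smul]⟩
  constructor
  · rintro l ⟨injA, surjA, CA, bndA⟩ hnp
    set CA' := max CA 0 with hCA'def
    have bndA' : ∀ x : A.domain, ‖(x : H)‖ ≤ CA' * ‖A x - l • (x : H)‖ := fun x =>
      (bndA x).trans (mul_le_mul_of_nonneg_right (le_max_left _ _) (norm_nonneg _))
    have injB : Function.Injective fun u : B.domain => B u - l • (u : K) := by
      intro u v huv
      have huv' : B u - l • (u : K) = B v - l • (v : K) := huv
      by_contra hne
      apply hnp
      refine ⟨u - v, ?_, ?_⟩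
      · intro h0
        apply hne
        apply Subtype.ext
        rw [AddSubgroupClass.coe_sub] at h0
        exact sub_eq_zero.mp h0
      · have h1 : B u - B v = l • (u : K) - l • (v : K) := by
          rw [sub_eq_sub_iff_sub_eq_sub]; exact huv'
        rw [B.map_sub, h1, AddSubgroupClass.coe_sub, smul_sub]
    refine ⟨injB, ?_, ?_⟩
    · intro y
      obtain ⟨x, hx⟩ := surjA (T.symm y)
      have hx' : A x - l • (x : H) = T.symm y := hx
      obtain ⟨hTx, hkey⟩ := key l x
      refine ⟨⟨(T : H →L[ℂ] K) (x : H), hTx⟩, ?_⟩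
      show B ⟨(T : H →L[ℂ] K) (x : H), hTx⟩ - l • (T : H →L[ℂ] K) (x : H) = y
      rw [hkey, hx']
      exact T.apply_symm_apply y
    · refine ⟨‖(T : H →L[ℂ] K)‖ * (CA' * ‖(T.symm : K →L[ℂ] H)‖), fun u => ?_⟩
      obtain ⟨x, hx⟩ := surjA (T.symm (B u - l • (u : K)))
      have hx' : A x - l • (x : H) = T.symm (B u - l • (u : K)) := hx
      obtain ⟨hTx, hkey⟩ := key l x
      have hu : (⟨(T : H →L[ℂ] K) (x : H), hTx⟩ : B.domain) = u := by
        apply injB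
        show B ⟨(T : H →L[ℂ] K) (x : H), hTx⟩ - l • (T : H →L[ℂ] K) (x : H)
          = B u - l • (u : K)
        rw [hkey, hx']
        exact T.apply_symm_apply _
      have hcoe : (u : K) = (T : H →L[ℂ] K) (x : H) := by rw [← hu]
      calc ‖(u : K)‖ = ‖(T : H →L[ℂ] K) (x : H)‖ := by rw [hcoe]
        _ ≤ ‖(T : H →L[ℂ] K)‖ * ‖(x : H)‖ := (T : H →L[ℂ] K).le_opNorm _
        _ ≤ ‖(T : H →L[ℂ] K)‖ * (CA' * ‖A x - l • (x : H)‖) :=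
            mul_le_mul_of_nonneg_left (bndA' x) (norm_nonneg _)
        _ = ‖(T : H →L[ℂ] K)‖ * (CA' * ‖(T.symm : K →L[ℂ] H) (B u - l • (u : K))‖) := by
            rw [hx']; rfl
        _ ≤ ‖(T : H →L[ℂ] K)‖ * (CA' * (‖(T.symm : K →L[ℂ] H)‖ * ‖B u - l • (u : K)‖)) := by
            refine mul_le_mul_of_nonneg_left ?_ (norm_nonneg _)
            exact mul_le_mul_of_nonneg_left ((T.symm : K →L[ℂ] H).le_opNorm _)
              (le_max_right CA 0)
        _ = ‖(T : H →L[ℂ] K)‖ * (CA' * ‖(T.symm : K →L[ℂ] H)‖) * ‖B u - l • (u : K)‖ := by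
            ring
  · rintro l ⟨injB, surjB, CB, bndB⟩ hnr
    set CB' := max CB 0 with hCB'def
    have bndB' : ∀ u : B.domain, ‖(u : K)‖ ≤ CB' * ‖B u - l • (u : K)‖ := fun u =>
      (bndB u).trans (mul_le_mul_of_nonneg_right (le_max_left _ _) (norm_nonneg _))
    have injA : Function.Injective fun x : A.domain => A x - l • (x : H) := by
      intro x y hxy
      have hxy' : A x - l • (x : H) = A y - l • (y : H) := hxy
      obtain ⟨hTx, hkx⟩ := key l x
      obtain ⟨hTy, hky⟩ := key l y
      have h2 : (⟨(T : H →L[ℂ] K) (x : H), hTx⟩ : B.domain)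
          = (⟨(T : H →L[ℂ] K) (y : H), hTy⟩ : B.domain) := by
        apply injB
        show B ⟨(T : H →L[ℂ] K) (x : H), hTx⟩ - l • (T : H →L[ℂ] K) (x : H)
          = B ⟨(T : H →L[ℂ] K) (y : H), hTy⟩ - l • (T : H →L[ℂ] K) (y : H)
        rw [hkx, hky, hxy']
      exact Subtype.ext (T.injective (congrArg Subtype.val h2))
    have hdense : DenseRange fun x : A.domain => A x - l • (x : H) := by
      by_contra h
      exact hnr ⟨injA, h⟩
    refine ⟨injA, ?_, ?_⟩
    · intro z
      obtain ⟨u, hu⟩ := surjB ((T : H →L[ℂ] K) z)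
      have hu' : B u - l • (u : K) = (T : H →L[ℂ] K) z := hu
      obtain ⟨y, hy_mem, hy_tend⟩ := mem_closure_iff_seq_limit.mp (hdense z)
      choose x hx using hy_mem
      have hx' : ∀ n, A (x n) - l • ((x n : H)) = y n := hx
      have hsub : ∀ n, ∃ hTn : (T : H →L[ℂ] K) ((x n : H)) ∈ B.domain,
          ‖(T : H →L[ℂ] K) ((x n : H)) - (u : K)‖
            ≤ CB' * ‖(T : H →L[ℂ] K) (y n - z)‖ := by
        intro n
        obtain ⟨hTn, hkn⟩ := key l (x n)
        refine ⟨hTn, ?_⟩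
        have hv := bndB' (⟨(T : H →L[ℂ] K) ((x n : H)), hTn⟩ - u)
        have hveq : B (⟨(T : H →L[ℂ] K) ((x n : H)), hTn⟩ - u)
            - l • (((⟨(T : H →L[ℂ] K) ((x n : H)), hTn⟩ - u : B.domain)) : K)
            = (T : H →L[ℂ] K) (y n - z) := by
          rw [B.map_sub, AddSubgroupClass.coe_sub, smul_sub, map_sub]
          have hrearr : B ⟨(T : H →L[ℂ] K) ((x n : H)), hTn⟩ - B u
              - (l • (T : H →L[ℂ] K) ((x n : H)) - l • (u : K))
              = (B ⟨(T : H →L[ℂ] K) ((x n : H)), hTn⟩ - l • (T : H →L[ℂ] K) ((x n : H)))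
              - (B u - l • (u : K)) := by abel
          rw [hrearr, hkn, hu', hx' n]
        rw [← hveq]
        simpa [AddSubgroupClass.coe_sub] using hv
      have hTx_tend : Filter.Tendsto (fun n => (T : H →L[ℂ] K) ((x n : H)))
          Filter.atTop (nhds (u : K)) := by
        rw [tendsto_iff_norm_sub_tendsto_zero]
        have hge : Filter.Tendsto (fun n => CB' * ‖(T : H →L[ℂ] K) (y n - z)‖)
            Filter.atTop (nhds 0) := by
          have h1 : Filter.Tendsto (fun n => y n - z) Filter.atTop (nhds (z - z)) :=
            hy_tend.sub tendsto_const_nhds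
          rw [sub_self] at h1
          have h2 : Filter.Tendsto (fun n => (T : H →L[ℂ] K) (y n - z))
              Filter.atTop (nhds ((T : H →L[ℂ] K) 0)) :=
            ((T : H →L[ℂ] K).continuous.tendsto 0).comp h1
          rw [map_zero] at h2
          simpa using h2.norm.const_mul CB'
        exact squeeze_zero (fun n => norm_nonneg _) (fun n => (hsub n).choose_spec) hge
      have hx_tend : Filter.Tendsto (fun n => ((x n : H))) Filter.atTop
          (nhds (T.symm (u : K))) := by
        have h3 : Filter.Tendsto (fun n => T.symm ((T : H →L[ℂ] K) ((x n : H))))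
            Filter.atTop (nhds (T.symm (u : K))) :=
          (T.symm.continuous.tendsto _).comp hTx_tend
        simp only [ContinuousLinearEquiv.coe_coe, ContinuousLinearEquiv.symm_apply_apply] at h3
        exact h3
      have hAx_tend : Filter.Tendsto (fun n => A (x n)) Filter.atTop
          (nhds (z + l • ((T.symm (u : K)) : H))) := by
        have heq : ∀ n, A (x n) = y n + l • ((x n : H)) := fun n =>
          sub_eq_iff_eq_add.mp (hx' n)
        simp only [heq]
        exact hy_tend.add (hx_tend.const_smul l)
      have hmem : (((T.symm (u : K)) : H), z + l • ((T.symm (u : K)) : H)) ∈ A.graph := by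
        refine hAc.mem_of_tendsto (hx_tend.prodMk_nhds hAx_tend) ?_
        exact Filter.Eventually.of_forall fun n => A.mem_graph (x n)
      obtain ⟨x', hx'1, hx'2⟩ := A.mem_graph_iff.mp hmem
      refine ⟨x', ?_⟩
      show A x' - l • ((x' : A.domain) : H) = z
      rw [hx'2, hx'1]
      show z + l • ((T.symm (u : K)) : H) - l • ((T.symm (u : K)) : H) = z
      exact add_sub_cancel_right z _
    · refine ⟨‖(T.symm : K →L[ℂ] H)‖ * (CB' * ‖(T : H →L[ℂ] K)‖), fun x => ?_⟩
      obtain ⟨hTx, hkx⟩ := key l x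
      calc ‖(x : H)‖ = ‖(T.symm : K →L[ℂ] H) ((T : H →L[ℂ] K) (x : H))‖ := by
            simp
        _ ≤ ‖(T.symm : K →L[ℂ] H)‖ * ‖(T : H →L[ℂ] K) (x : H)‖ :=
            (T.symm : K →L[ℂ] H).le_opNorm _
        _ ≤ ‖(T.symm : K →L[ℂ] H)‖
            * (CB' * ‖B ⟨(T : H →L[ℂ] K) (x : H), hTx⟩ - l • (T : H →L[ℂ] K) (x : H)‖) :=
            mul_le_mul_of_nonneg_left
              (bndB' ⟨(T : H →L[ℂ] K) (x : H), hTx⟩) (norm_nonneg _)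
        _ = ‖(T.symm : K →L[ℂ] H)‖ * (CB' * ‖(T : H →L[ℂ] K) (A x - l • (x : H))‖) := by
            rw [hkx]
        _ ≤ ‖(T.symm : K →L[ℂ] H)‖ * (CB' * (‖(T : H →L[ℂ] K)‖ * ‖A x - l • (x : H)‖)) := by
            refine mul_le_mul_of_nonneg_left ?_ (norm_nonneg _)
            exact mul_le_mul_of_nonneg_left ((T : H →L[ℂ] K).le_opNorm _)
              (le_max_right CB 0)
        _ = ‖(T.symm : K →L[ℂ] H)‖ * (CB' * ‖(T : H →L[ℂ] K)‖) * ‖A x - l • (x : H)‖ := by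
            ring
end
end

section
/- Let A and B be closed, densely defined linear operators in complex Hilbert spaces H and K respectively, and assume A ⊣ B with intertwining operator T which is bijective with bounded inverse T^{-1} : K → H, and such that TD(A) is a core for B. Then σ_p(A) ⊆ σ_p(B) ⊆ σ(B) ⊆ σ(A). -/
open scoped ComplexInnerProductSpace

noncomputable section

/-- If `A`, `B` are closed, densely defined and `A ⊣ B` with intertwining
operator `T` which is bijective with bounded inverse, and `T D(A)` is a core for `B`, then
`σ_p(A) ⊆ σ_p(B) ⊆ σ(B) ⊆ σ(A)`. -/
theorem statement_19 {H K : Type*} [NormedAddCommGroup H] [InnerProductSpace ℂ H]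
    [NormedAddCommGroup K] [InnerProductSpace ℂ K]
    (A : H →ₗ.[ℂ] H) (B : K →ₗ.[ℂ] K)
    (hA : Dense (A.domain : Set H)) (hB : Dense (B.domain : Set K))
    (hAc : A.IsClosed) (hBc : B.IsClosed)
    (T : H ≃L[ℂ] K) (hT : Intertwines (T : H →L[ℂ] K) A B)
    (hcore : Submodule.topologicalClosure
        ((B.domRestrict (Submodule.map ((T : H →L[ℂ] K) : H →ₗ[ℂ] K) A.domain)).graph)
      = B.graph) :
    (∀ l : ℂ, InPointSpectrum A l → InPointSpectrum B l) ∧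
    (∀ l : ℂ, InPointSpectrum B l → ¬ InResolvent B l) ∧
    (∀ l : ℂ, ¬ InResolvent B l → ¬ InResolvent A l) := by
  
  obtain ⟨p2, p3⟩ : ((∀ l : ℂ, InPointSpectrum B l → ¬ InResolvent B l) ∧
      (∀ l : ℂ, ¬ InResolvent B l → ¬ InResolvent A l)) := by
    constructor
    · rintro l ⟨x, hx0, hBx⟩ ⟨hinj, -, -⟩
      have h0 : B x - l • (x : K) = B (0 : B.domain) - l • ((0 : B.domain) : K) := by
        simp [hBx]
      have := hinj h0
      exact hx0 (by rw [this]; simp)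
    · intro l hnB hAres
      apply hnB
      obtain ⟨hinjA, hsurjA, C, hC⟩ := hAres
      set C0 : ℝ := max C 0 with hC0def
      set C' : ℝ := ‖(T : H →L[ℂ] K)‖ * (C0 * ‖(T.symm : K →L[ℂ] H)‖) with hC'def
      have hbound : ∀ y : B.domain, ‖(y : K)‖ ≤ C' * ‖B y - l • (y : K)‖ := by
        have hclosed : IsClosed {p : K × K | ‖p.1‖ ≤ C' * ‖p.2 - l • p.1‖} := by
          apply isClosed_le
          · exact (continuous_norm.comp continuous_fst)
          · exact (continuous_const.mul ((continuous_snd.sub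
              (continuous_const.smul continuous_fst)).norm))
        have hsub : ((B.domRestrict (Submodule.map ((T : H →L[ℂ] K) : H →ₗ[ℂ] K)
            A.domain)).graph : Set (K × K)) ⊆ {p : K × K | ‖p.1‖ ≤ C' * ‖p.2 - l • p.1‖} := by
          rintro ⟨y, z⟩ hyz
          rw [SetLike.mem_coe, LinearPMap.mem_graph_iff] at hyz
          obtain ⟨w, hw1, hw2⟩ := hyz
          have hw1' : (w : K) = y := hw1
          have hw2' : B.domRestrict (Submodule.map ((T : H →L[ℂ] K) : H →ₗ[ℂ] K) A.domain) w
              = z := hw2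
          obtain ⟨hwS, hwB⟩ := w.2
          obtain ⟨x, hxA, hxw⟩ := hwS
          have hxw' : (T : H →L[ℂ] K) x = (w : K) := hxw
          obtain ⟨hmem, heq⟩ := hT ⟨x, hxA⟩
          have hz : z = B ⟨(w : K), hwB⟩ := by
            rw [← hw2']
            exact (LinearPMap.domRestrict_apply (y := ⟨(w : K), hwB⟩) rfl).symm
          have hBval : B ⟨(w : K), hwB⟩ = (T : H →L[ℂ] K) (A ⟨x, hxA⟩) := by
            rw [← heq]; congr 1; exact Subtype.ext hxw'.symm
          have hy : y = (T : H →L[ℂ] K) x := by rw [← hw1', ← hxw']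
          have hkey : z - l • y = (T : H →L[ℂ] K) (A ⟨x, hxA⟩ - l • x) := by
            rw [hz, hBval, hy, map_sub, map_smul]
          have h1 : ‖x‖ ≤ C0 * ‖A ⟨x, hxA⟩ - l • x‖ :=
            le_trans (hC ⟨x, hxA⟩) (mul_le_mul_of_nonneg_right (le_max_left _ _)
              (norm_nonneg _))
          have h2 : ‖A ⟨x, hxA⟩ - l • x‖ ≤ ‖(T.symm : K →L[ℂ] H)‖ * ‖z - l • y‖ := by
            have he : A ⟨x, hxA⟩ - l • x = (T.symm : K →L[ℂ] H) (z - l • y) := by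
              rw [hkey]; simp
            rw [he]
            exact (T.symm : K →L[ℂ] H).le_opNorm _
          have h3 : ‖y‖ ≤ ‖(T : H →L[ℂ] K)‖ * ‖x‖ := by
            rw [hy]; exact (T : H →L[ℂ] K).le_opNorm _
          have hTn : (0:ℝ) ≤ ‖(T : H →L[ℂ] K)‖ := norm_nonneg _
          have hC0n : (0:ℝ) ≤ C0 := le_max_right _ _
          show ‖y‖ ≤ C' * ‖z - l • y‖
          calc ‖y‖ ≤ ‖(T : H →L[ℂ] K)‖ * ‖x‖ := h3
            _ ≤ ‖(T : H →L[ℂ] K)‖ * (C0 * ‖A ⟨x, hxA⟩ - l • x‖) :=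
                mul_le_mul_of_nonneg_left h1 hTn
            _ ≤ ‖(T : H →L[ℂ] K)‖ * (C0 * (‖(T.symm : K →L[ℂ] H)‖ * ‖z - l • y‖)) :=
                mul_le_mul_of_nonneg_left (mul_le_mul_of_nonneg_left h2 hC0n) hTn
            _ = C' * ‖z - l • y‖ := by rw [hC'def]; ring
        intro y
        have hy : ((y : K), B y) ∈ B.graph := B.mem_graph y
        rw [← hcore] at hy
        have hy' : ((y : K), B y) ∈
            closure ((B.domRestrict (Submodule.map ((T : H →L[ℂ] K) : H →ₗ[ℂ] K)
              A.domain)).graph : Set (K × K)) := by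
          rw [← Submodule.topologicalClosure_coe]; exact hy
        exact closure_minimal hsub hclosed hy'
      refine ⟨?_, ?_, C', hbound⟩
      · intro y₁ y₂ h
        have hthis : B y₁ - l • (y₁ : K) = B y₂ - l • (y₂ : K) := h
        have hb := hbound (y₁ - y₂)
        have hcoe : ((y₁ - y₂ : B.domain) : K) = (y₁ : K) - (y₂ : K) := rfl
        have hz : B (y₁ - y₂) - l • ((y₁ - y₂ : B.domain) : K) = 0 := by
          rw [B.map_sub, hcoe, smul_sub, sub_sub_sub_comm, hthis, sub_self]
        rw [hz, norm_zero, mul_zero] at hb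
        have h0 : ((y₁ - y₂ : B.domain) : K) = 0 := norm_le_zero_iff.mp hb
        rw [hcoe] at h0
        exact Subtype.ext (sub_eq_zero.mp h0)
      · intro z
        obtain ⟨x, hx⟩ := hsurjA ((T.symm : K →L[ℂ] H) z)
        have hx' : A x - l • (x : H) = (T.symm : K →L[ℂ] H) z := hx
        obtain ⟨hmem, heq⟩ := hT x
        refine ⟨⟨(T : H →L[ℂ] K) (x : H), hmem⟩, ?_⟩
        show B ⟨(T : H →L[ℂ] K) (x : H), hmem⟩ - l • ((T : H →L[ℂ] K) (x : H)) = z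
        rw [heq, ← map_smul, ← map_sub, hx']
        simp
  refine ⟨?_, p2, p3⟩
  rintro l ⟨x, hx0, hAx⟩
  obtain ⟨hmem, heq⟩ := hT x
  refine ⟨⟨(T : H →L[ℂ] K) (x : H), hmem⟩, ?_, ?_⟩
  · intro h
    have h1 : T (x : H) = T 0 := by simpa using h
    exact hx0 (T.injective h1)
  · show B ⟨(T : H →L[ℂ] K) (x : H), hmem⟩ = l • ((T : H →L[ℂ] K) (x : H))
    rw [heq, hAx, map_smul]
end
end
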